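/- Let q ≥ 3 be a prime power with q ≢ 1 (mod 3), let G = SL_3(F_q) acting naturally on V = F_q^3, let H be the stabilizer in G of a 1-dimensional subspace of V, and let K be the stabilizer in G of a 2-dimensional subspace of V. Then the 4-tuple (H, H, K, K) is non-regular: for all g_1, g_2, g_3, g_4 ∈ G, the intersection g_1 H g_1^{-1} ∩ g_2 H g_2^{-1} ∩ g_3 K g_3^{-1} ∩ g_4 K g_4^{-1} is nontrivial. -/

import Mathlib

open Matrix
/-- The conjugate `g H g⁻¹` of a subgroup `H` by an element `g`. -/
def conjSub {G : Type*} [Group G] (g : G) (H : Subgroup G) : Subgroup G :=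
  H.map (MulAut.conj g).toMonoidHom

/-- The stabilizer in `SL(ι, F)` of a subspace `U` of the natural module. -/
def slSubspaceStab {ι F : Type*} [Fintype ι] [DecidableEq ι] [CommRing F]
    (U : Submodule F (ι → F)) : Subgroup (Matrix.SpecialLinearGroup ι F) where
  carrier := {g | ∀ v : ι → F, v ∈ U ↔ (↑g : Matrix ι ι F) *ᵥ v ∈ U}
  one_mem' := by intro v; simp
  mul_mem' := by
    intro a b ha hb v
    rw [hb v]
    simpa [Matrix.mulVec_mulVec] using ha ((↑b : Matrix ι ι F) *ᵥ v)
  inv_mem' := by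
    intro a ha v
    have key : (↑a : Matrix ι ι F) *ᵥ ((↑(a⁻¹) : Matrix ι ι F) *ᵥ v) = v := by
      rw [Matrix.mulVec_mulVec, ← Matrix.SpecialLinearGroup.coe_mul, mul_inv_cancel]
      simp
    have := ha ((↑(a⁻¹) : Matrix ι ι F) *ᵥ v)
    rw [key] at this
    exact this.symm


section Aux
open Module
variable {F : Type*} [Field F]

-- rank-one update matrix
noncomputable def rkMat (a c : F) (u φ : Fin 3 → F) : Matrix (Fin 3) (Fin 3) F :=
  a • (1 + c • Matrix.vecMulVec u φ)

lemma rkMat_mulVec (a c : F) (u φ v : Fin 3 → F) :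
    rkMat a c u φ *ᵥ v = a • (v + (c * (φ ⬝ᵥ v)) • u) := by
  have h : Matrix.vecMulVec u φ *ᵥ v = (φ ⬝ᵥ v) • u := by
    ext i
    simp [Matrix.mulVec, Matrix.vecMulVec, dotProduct, Finset.sum_mul, Finset.mul_sum]
    ring_nf
  rw [rkMat, Matrix.smul_mulVec, Matrix.add_mulVec, Matrix.one_mulVec,
    Matrix.smul_mulVec, h, smul_smul]

lemma rkMat_det (a c : F) (u φ : Fin 3 → F) :
    (rkMat a c u φ).det = a ^ 3 * (1 + c * (φ ⬝ᵥ u)) := by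
  have h1 : c • Matrix.vecMulVec u φ = Matrix.vecMulVec (c • u) φ := by
    ext i j; simp [Matrix.vecMulVec]; ring
  rw [rkMat, Matrix.det_smul, h1, Matrix.vecMulVec_eq Unit, Matrix.det_one_add_replicateCol_mul_replicateRow]
  simp [mul_comm]


lemma rkMat_inv (a c : F) (u φ : Fin 3 → F) (ha : a ≠ 0) (h1 : 1 + c * (φ ⬝ᵥ u) ≠ 0)
    (S : Submodule F (Fin 3 → F)) (hS : u ∈ S ∨ ∀ y ∈ S, φ ⬝ᵥ y = 0) (v : Fin 3 → F) :
    v ∈ S ↔ rkMat a c u φ *ᵥ v ∈ S := by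
  rw [rkMat_mulVec, S.smul_mem_iff ha]
  rcases hS with hu | hker
  · constructor
    · exact fun hv => S.add_mem hv (S.smul_mem _ hu)
    · intro hw
      have : v = (v + (c * (φ ⬝ᵥ v)) • u) - (c * (φ ⬝ᵥ v)) • u := by abel
      rw [this]
      exact S.sub_mem hw (S.smul_mem _ hu)
  · constructor
    · intro hv
      rw [hker v hv]
      simpa using hv
    · intro hw
      have h0 : φ ⬝ᵥ (v + (c * (φ ⬝ᵥ v)) • u) = 0 := hker _ hw
      rw [dotProduct_add, dotProduct_smul] at h0
      have h2 : (φ ⬝ᵥ v) * (1 + c * (φ ⬝ᵥ u)) = 0 := by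
        rw [← h0]; ring_nf
      have h3 : φ ⬝ᵥ v = 0 := by
        rcases mul_eq_zero.mp h2 with h | h
        · exact h
        · exact absurd h h1
      rw [h3] at hw
      simpa using hw

lemma exists_covector (S : Submodule F (Fin 3 → F)) {x : Fin 3 → F} (hx : x ∉ S) :
    ∃ φ : Fin 3 → F, φ ⬝ᵥ x ≠ 0 ∧ ∀ y ∈ S, φ ⬝ᵥ y = 0 := by
  obtain ⟨f, hfx, hmap⟩ := S.exists_dual_map_eq_bot_of_notMem hx inferInstance
  refine ⟨fun j => f (fun k => if j = k then 1 else 0), ?_, ?_⟩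
  · have hd : ∀ z : Fin 3 → F,
        (fun j => f (fun k => if j = k then 1 else 0)) ⬝ᵥ z = f z := by
      intro z
      rw [LinearMap.pi_apply_eq_sum_univ f z]
      simp [dotProduct, smul_eq_mul, mul_comm]
    rw [hd]; exact hfx
  · intro y hy
    have hd : (fun j => f (fun k => if j = k then 1 else 0)) ⬝ᵥ y = f y := by
      rw [LinearMap.pi_apply_eq_sum_univ f y]
      simp [dotProduct, smul_eq_mul, mul_comm]
    rw [hd]
    have : f y ∈ S.map f := Submodule.mem_map_of_mem hy
    rw [hmap] at this
    simpa using this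


lemma mem_slStab {U : Submodule F (Fin 3 → F)} {g : Matrix.SpecialLinearGroup (Fin 3) F} :
    g ∈ slSubspaceStab U ↔ ∀ v : Fin 3 → F, v ∈ U ↔ (↑g : Matrix (Fin 3) (Fin 3) F) *ᵥ v ∈ U :=
  Iff.rfl

lemma mem_map_iff_sl (g : Matrix.SpecialLinearGroup (Fin 3) F) (U : Submodule F (Fin 3 → F))
    (v : Fin 3 → F) :
    v ∈ U ↔ (↑g : Matrix (Fin 3) (Fin 3) F) *ᵥ v ∈
      U.map (Matrix.mulVecLin (↑g : Matrix (Fin 3) (Fin 3) F)) := by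
  constructor
  · intro hv
    exact ⟨v, hv, by simp [Matrix.mulVecLin_apply]⟩
  · rintro ⟨w, hw, hgw⟩
    simp only [Matrix.mulVecLin_apply] at hgw
    have : (↑(g⁻¹) : Matrix (Fin 3) (Fin 3) F) *ᵥ ((↑g : Matrix (Fin 3) (Fin 3) F) *ᵥ w)
        = (↑(g⁻¹) : Matrix (Fin 3) (Fin 3) F) *ᵥ ((↑g : Matrix (Fin 3) (Fin 3) F) *ᵥ v) :=
      by rw [hgw]
    rw [Matrix.mulVec_mulVec, Matrix.mulVec_mulVec, ← Matrix.SpecialLinearGroup.coe_mul,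
      inv_mul_cancel] at this
    simp only [Matrix.SpecialLinearGroup.coe_one, Matrix.one_mulVec] at this
    rwa [← this]

lemma finrank_map_sl (g : Matrix.SpecialLinearGroup (Fin 3) F) (U : Submodule F (Fin 3 → F)) :
    finrank F (U.map (Matrix.mulVecLin (↑g : Matrix (Fin 3) (Fin 3) F))) = finrank F U := by
  have h1 : Matrix.mulVecLin (↑g : Matrix (Fin 3) (Fin 3) F) ∘ₗ
      Matrix.mulVecLin (↑(g⁻¹) : Matrix (Fin 3) (Fin 3) F) = LinearMap.id := by
    rw [← Matrix.mulVecLin_mul, ← Matrix.SpecialLinearGroup.coe_mul, mul_inv_cancel]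
    simp
  have h2 : Matrix.mulVecLin (↑(g⁻¹) : Matrix (Fin 3) (Fin 3) F) ∘ₗ
      Matrix.mulVecLin (↑g : Matrix (Fin 3) (Fin 3) F) = LinearMap.id := by
    rw [← Matrix.mulVecLin_mul, ← Matrix.SpecialLinearGroup.coe_mul, inv_mul_cancel]
    simp
  let e : (Fin 3 → F) ≃ₗ[F] (Fin 3 → F) :=
    LinearEquiv.ofLinear (Matrix.mulVecLin (↑g : Matrix (Fin 3) (Fin 3) F))
      (Matrix.mulVecLin (↑(g⁻¹) : Matrix (Fin 3) (Fin 3) F)) h1 h2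
  have : (e : (Fin 3 → F) →ₗ[F] (Fin 3 → F)) = Matrix.mulVecLin (↑g : Matrix (Fin 3) (Fin 3) F) :=
    rfl
  rw [← this]
  exact LinearEquiv.finrank_map_eq e U

lemma mem_conjSub_of_stab_map (g h : Matrix.SpecialLinearGroup (Fin 3) F)
    (U : Submodule F (Fin 3 → F))
    (hst : h ∈ slSubspaceStab (U.map (Matrix.mulVecLin (↑g : Matrix (Fin 3) (Fin 3) F)))) :
    h ∈ conjSub g (slSubspaceStab U) := by
  refine Subgroup.mem_map.mpr ⟨g⁻¹ * h * g, ?_, ?_⟩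
  · intro v
    have L1 := mem_map_iff_sl g U
    have key : (↑g : Matrix (Fin 3) (Fin 3) F) *ᵥ ((↑(g⁻¹ * h * g) : Matrix (Fin 3) (Fin 3) F) *ᵥ v)
        = (↑h : Matrix (Fin 3) (Fin 3) F) *ᵥ ((↑g : Matrix (Fin 3) (Fin 3) F) *ᵥ v) := by
      rw [Matrix.mulVec_mulVec, Matrix.mulVec_mulVec, ← Matrix.SpecialLinearGroup.coe_mul,
        ← Matrix.SpecialLinearGroup.coe_mul]
      group
    rw [L1 v, hst ((↑g : Matrix (Fin 3) (Fin 3) F) *ᵥ v), ← key, ← L1]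
  · simp [MulAut.conj_apply]
    group


lemma core_exists [Fintype F] (hcard : 3 ≤ Fintype.card F)
    (U₁ U₂ W₁ W₂ : Submodule F (Fin 3 → F))
    (h1 : finrank F U₁ = 1) (h2 : finrank F U₂ = 1)
    (h3 : finrank F W₁ = 2) (h4 : finrank F W₂ = 2) :
    ∃ A : Matrix (Fin 3) (Fin 3) F, A.det = 1 ∧ (∃ v : Fin 3 → F, A *ᵥ v ≠ v) ∧
      ∀ S ∈ ({U₁, U₂, W₁, W₂} : Set (Submodule F (Fin 3 → F))),
        ∀ v : Fin 3 → F, v ∈ S ↔ A *ᵥ v ∈ S := by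
  classical
  have hdim : finrank F (Fin 3 → F) = 3 := finrank_fin_fun F
  have hS₀le : finrank F ↥(U₁ ⊔ U₂) ≤ 2 := by
    have := Submodule.finrank_sup_add_finrank_inf_eq U₁ U₂
    omega
  have hDge : 1 ≤ finrank F ↥(W₁ ⊓ W₂) := by
    have heq := Submodule.finrank_sup_add_finrank_inf_eq W₁ W₂
    have hle : finrank F ↥(W₁ ⊔ W₂) ≤ 3 := by
      have := Submodule.finrank_le (W₁ ⊔ W₂)
      omega
    omega
  -- a vector not in a proper subspace
  have hnotmem : ∀ S : Submodule F (Fin 3 → F), finrank F S ≤ 2 → ∃ x, x ∉ S := by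
    intro S hS
    by_contra hc
    push_neg at hc
    have : S = ⊤ := Submodule.eq_top_iff'.mpr hc
    rw [this, finrank_top, hdim] at hS
    omega
  by_cases hA : ∃ u, u ∈ W₁ ⊓ W₂ ∧ u ≠ 0 ∧ finrank F ↥((U₁ ⊔ U₂) ⊔ Submodule.span F {u}) ≤ 2
  · -- transvection case
    obtain ⟨u, huD, hu0, hrk⟩ := hA
    obtain ⟨x, hx⟩ := hnotmem _ hrk
    obtain ⟨φ, hφx, hφ0⟩ := exists_covector _ hx
    have hφu : φ ⬝ᵥ u = 0 :=
      hφ0 u (Submodule.mem_sup_right (Submodule.mem_span_singleton_self u))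
    refine ⟨rkMat 1 1 u φ, ?_, ⟨x, ?_⟩, ?_⟩
    · rw [rkMat_det, hφu]; ring
    · rw [rkMat_mulVec]
      simp only [one_smul, one_mul]
      intro hcon
      have : (φ ⬝ᵥ x) • u = 0 := by
        have := congrArg (fun z => z - x) hcon
        simpa using this
      rcases smul_eq_zero.mp this with h | h
      · exact hφx h
      · exact hu0 h
    · intro S hSmem v
      have hcond : u ∈ S ∨ ∀ y ∈ S, φ ⬝ᵥ y = 0 := by
        rcases hSmem with rfl | rfl | rfl | rfl
        · exact Or.inr fun y hy => hφ0 y (Submodule.mem_sup_left (Submodule.mem_sup_left hy))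
        · exact Or.inr fun y hy => hφ0 y (Submodule.mem_sup_left (Submodule.mem_sup_right hy))
        · exact Or.inl huD.1
        · exact Or.inl huD.2
      exact rkMat_inv 1 1 u φ one_ne_zero (by rw [hφu]; simp) S hcond v
  · -- semisimple case
    push_neg at hA
    have hDbot : W₁ ⊓ W₂ ≠ ⊥ := by
      intro hb
      rw [hb, finrank_bot] at hDge
      omega
    obtain ⟨u, huD, hu0⟩ := Submodule.ne_bot_iff (W₁ ⊓ W₂) |>.mp hDbot
    have huS₀ : u ∉ U₁ ⊔ U₂ := by
      intro hmem
      have heq : (U₁ ⊔ U₂) ⊔ Submodule.span F {u} = U₁ ⊔ U₂ :=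
        sup_eq_left.mpr ((Submodule.span_singleton_le_iff_mem u (U₁ ⊔ U₂)).mpr hmem)
      have hgt := hA u huD hu0
      rw [heq] at hgt
      omega
    obtain ⟨φ, hφu, hφ0⟩ := exists_covector _ huS₀
    -- pick a ≠ 0, 1
    have haex : ∃ a : F, a ≠ 0 ∧ a ≠ 1 := by
      by_contra hc
      push_neg at hc
      have hsub : (Finset.univ : Finset F) ⊆ {0, 1} := by
        intro a _
        rcases eq_or_ne a 0 with rfl | h
        · simp
        · simp [hc a h]
      have : Fintype.card F ≤ 2 := by
        calc Fintype.card F = (Finset.univ : Finset F).card := rfl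
          _ ≤ ({0, 1} : Finset F).card := Finset.card_le_card hsub
          _ ≤ 2 := Finset.card_insert_le _ _ |>.trans (by simp)
      omega
    obtain ⟨a, ha0, ha1⟩ := haex
    set t := φ ⬝ᵥ u with ht
    set c : F := (a⁻¹ * a⁻¹ * a⁻¹ - 1) / t with hc
    have hkey : 1 + c * t = a⁻¹ * a⁻¹ * a⁻¹ := by
      rw [hc, div_mul_cancel₀ _ hφu]
      ring
    have hdet : (rkMat a c u φ).det = 1 := by
      rw [rkMat_det, ← ht, hkey]
      field_simp
    have h1' : 1 + c * (φ ⬝ᵥ u) ≠ 0 := by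
      rw [← ht, hkey]
      simp [ha0]
    -- nonzero vector in U₁ ≤ S₀
    have hU₁bot : U₁ ≠ ⊥ := by intro hb; rw [hb, finrank_bot] at h1; omega
    obtain ⟨w, hwU, hw0⟩ := Submodule.ne_bot_iff U₁ |>.mp hU₁bot
    have hwS₀ : w ∈ U₁ ⊔ U₂ := Submodule.mem_sup_left hwU
    refine ⟨rkMat a c u φ, hdet, ⟨w, ?_⟩, ?_⟩
    · rw [rkMat_mulVec, hφ0 w hwS₀]
      simp only [mul_zero, zero_smul, add_zero]
      intro hcon
      have : (a - 1) • w = 0 := by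
        rw [sub_smul, one_smul, hcon, sub_self]
      rcases smul_eq_zero.mp this with h | h
      · exact ha1 (sub_eq_zero.mp h)
      · exact hw0 h
    · intro S hSmem v
      have hcond : u ∈ S ∨ ∀ y ∈ S, φ ⬝ᵥ y = 0 := by
        rcases hSmem with rfl | rfl | rfl | rfl
        · exact Or.inr fun y hy => hφ0 y (Submodule.mem_sup_left hy)
        · exact Or.inr fun y hy => hφ0 y (Submodule.mem_sup_right hy)
        · exact Or.inl huD.1
        · exact Or.inl huD.2
      exact rkMat_inv a c u φ ha0 h1' S hcond v

end Aux

theorem sl3_point_line_four_tuple_nonregular {F : Type*} [Field F] [Fintype F]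
    (q : ℕ) (hq : Fintype.card F = q) (hq3 : 3 ≤ q) (hqmod : q % 3 ≠ 1)
    (U W : Submodule F (Fin 3 → F))
    (hU : Module.finrank F ↥U = 1) (hW : Module.finrank F ↥W = 2) :
    ∀ g₁ g₂ g₃ g₄ : Matrix.SpecialLinearGroup (Fin 3) F,
      conjSub g₁ (slSubspaceStab U) ⊓ conjSub g₂ (slSubspaceStab U) ⊓
        conjSub g₃ (slSubspaceStab W) ⊓ conjSub g₄ (slSubspaceStab W) ≠ ⊥ := by
  intro g₁ g₂ g₃ g₄ hbot
  have hcard : 3 ≤ Fintype.card F := by rw [hq]; exact hq3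
  obtain ⟨A, hdet, ⟨v₀, hv₀⟩, hstab⟩ := core_exists hcard
    (U.map (Matrix.mulVecLin (↑g₁ : Matrix (Fin 3) (Fin 3) F)))
    (U.map (Matrix.mulVecLin (↑g₂ : Matrix (Fin 3) (Fin 3) F)))
    (W.map (Matrix.mulVecLin (↑g₃ : Matrix (Fin 3) (Fin 3) F)))
    (W.map (Matrix.mulVecLin (↑g₄ : Matrix (Fin 3) (Fin 3) F)))
    (by rw [finrank_map_sl]; exact hU) (by rw [finrank_map_sl]; exact hU)
    (by rw [finrank_map_sl]; exact hW) (by rw [finrank_map_sl]; exact hW)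
  set h : Matrix.SpecialLinearGroup (Fin 3) F := ⟨A, hdet⟩ with hh
  have hne : h ≠ 1 := by
    intro hcon
    apply hv₀
    have : A = (1 : Matrix (Fin 3) (Fin 3) F) := by
      have := congrArg (Subtype.val) hcon
      simpa [hh] using this
    rw [this, Matrix.one_mulVec]
  have hmem : ∀ g : Matrix.SpecialLinearGroup (Fin 3) F, ∀ S : Submodule F (Fin 3 → F),
      (∀ v : Fin 3 → F, v ∈ S.map (Matrix.mulVecLin (↑g : Matrix (Fin 3) (Fin 3) F)) ↔
        A *ᵥ v ∈ S.map (Matrix.mulVecLin (↑g : Matrix (Fin 3) (Fin 3) F))) →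
      h ∈ conjSub g (slSubspaceStab S) := by
    intro g S hs
    exact mem_conjSub_of_stab_map g h S (mem_slStab.mpr hs)
  have h₁ := hmem g₁ U (hstab _ (by simp))
  have h₂ := hmem g₂ U (hstab _ (by simp))
  have h₃ := hmem g₃ W (hstab _ (by simp))
  have h₄ := hmem g₄ W (hstab _ (by simp))
  have : h ∈ conjSub g₁ (slSubspaceStab U) ⊓ conjSub g₂ (slSubspaceStab U) ⊓
      conjSub g₃ (slSubspaceStab W) ⊓ conjSub g₄ (slSubspaceStab W) :=
    Subgroup.mem_inf.mpr ⟨Subgroup.mem_inf.mpr ⟨Subgroup.mem_inf.mpr ⟨h₁, h₂⟩, h₃⟩, h₄⟩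
  rw [hbot] at this
  exact hne (Subgroup.mem_bot.mp this)
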